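/- arXiv:2106.07154 — 3 statements merged into one kernel-verified Lean document; each statement's English description precedes it below -/
import Mathlib

section
/- Suppose h₀ > 0 and for every h ∈ [0, h₀] the forward-Euler map E_h(y) = y + h·f(y) is nonexpansive, i.e. ‖E_h(y) − E_h(z)‖ ≤ ‖y − z‖ for all y, z ∈ E. Then for every h ∈ [0, h₀] the SSPRK3 step is also nonexpansive: ‖Φ₃(h,f,y) − Φ₃(h,f,z)‖ ≤ ‖y − z‖ for all y, z ∈ E. -/
/-- One step of the SSPRK3 method with step size `h` for the ODE `y' = f(y)`:
`Φ₃(h,f,y) = (1/3)y + (2/3)y₂ + (2/3)h·f(y₂)` where `y₁ = y + h·f(y)` and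
`y₂ = (3/4)y + (1/4)y₁ + (1/4)h·f(y₁)`. -/
noncomputable def ssprk3Step {E : Type*} [AddCommGroup E] [Module ℝ E]
    (h : ℝ) (f : E → E) (y : E) : E :=
  let y₁ := y + h • f y
  let y₂ := (3 / 4 : ℝ) • y + (1 / 4 : ℝ) • y₁ + ((1 / 4 : ℝ) * h) • f y₁
  (1 / 3 : ℝ) • y + (2 / 3 : ℝ) • y₂ + ((2 / 3 : ℝ) * h) • f y₂

private lemma conv_bound {E : Type*} [NormedAddCommGroup E] [NormedSpace ℝ E]
    {a b d : ℝ} (ha : 0 ≤ a) (hb : 0 ≤ b) (hab : a + b = 1)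
    {u v : E} (hu : ‖u‖ ≤ d) (hv : ‖v‖ ≤ d) : ‖a • u + b • v‖ ≤ d := by
  calc ‖a • u + b • v‖ ≤ ‖a • u‖ + ‖b • v‖ := norm_add_le _ _
    _ = a * ‖u‖ + b * ‖v‖ := by rw [norm_smul, norm_smul, Real.norm_of_nonneg ha,
        Real.norm_of_nonneg hb]
    _ ≤ a * d + b * d := by
        have := norm_nonneg u
        nlinarith
    _ = d := by rw [← add_mul, hab, one_mul]

/-- If the forward-Euler map `y ↦ y + h·f(y)` is nonexpansive for every `h ∈ [0, h₀]`,
then the SSPRK3 step is nonexpansive for every `h ∈ [0, h₀]`. -/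
theorem ssprk3_nonexpansive_of_euler_nonexpansive
    {E : Type*} [NormedAddCommGroup E] [NormedSpace ℝ E]
    (f : E → E) (h₀ : ℝ) (hh₀ : 0 < h₀)
    (heuler : ∀ h ∈ Set.Icc (0 : ℝ) h₀, ∀ y z : E,
      ‖(y + h • f y) - (z + h • f z)‖ ≤ ‖y - z‖) :
    ∀ h ∈ Set.Icc (0 : ℝ) h₀, ∀ y z : E,
      ‖ssprk3Step h f y - ssprk3Step h f z‖ ≤ ‖y - z‖ := by
  intro h hh y z
  have he := heuler h hh
  set y₁ := y + h • f y with hy₁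
  set z₁ := z + h • f z with hz₁
  have h1 : ‖y₁ - z₁‖ ≤ ‖y - z‖ := he y z
  set y₂ := (3 / 4 : ℝ) • y + (1 / 4 : ℝ) • y₁ + ((1 / 4 : ℝ) * h) • f y₁ with hy₂
  set z₂ := (3 / 4 : ℝ) • z + (1 / 4 : ℝ) • z₁ + ((1 / 4 : ℝ) * h) • f z₁ with hz₂
  have e2 : y₂ - z₂ = (3 / 4 : ℝ) • (y - z) + (1 / 4 : ℝ) • ((y₁ + h • f y₁) - (z₁ + h • f z₁)) := by
    rw [hy₂, hz₂]; module
  have h2 : ‖y₂ - z₂‖ ≤ ‖y - z‖ := by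
    rw [e2]
    exact conv_bound (by norm_num) (by norm_num) (by norm_num) le_rfl
      ((he y₁ z₁).trans h1)
  have e3 : ssprk3Step h f y - ssprk3Step h f z =
      (1 / 3 : ℝ) • (y - z) + (2 / 3 : ℝ) • ((y₂ + h • f y₂) - (z₂ + h • f z₂)) := by
    simp only [ssprk3Step, ← hy₁, ← hz₁, ← hy₂, ← hz₂]
    module
  rw [e3]
  exact conv_bound (by norm_num) (by norm_num) (by norm_num) le_rfl
    ((he y₂ z₂).trans h2)
end

section
/- Suppose h₀ > 0 and for every h ∈ [0, h₀] the forward-Euler map is strongly stable in norm, i.e. ‖y + h·f(y)‖ ≤ ‖y‖ for all y ∈ E. Then for every h ∈ [0, h₀] the SSPRK3 step is strongly stable: ‖Φ₃(h,f,y)‖ ≤ ‖y‖ for all y ∈ E. -/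
/-- If the forward-Euler map `y ↦ y + h·f(y)` is strongly stable in norm for every
`h ∈ [0, h₀]`, then the SSPRK3 step is strongly stable for every `h ∈ [0, h₀]`. -/
theorem ssprk3_strongly_stable_of_euler_strongly_stable
    {E : Type*} [NormedAddCommGroup E] [NormedSpace ℝ E]
    (f : E → E) (h₀ : ℝ) (hh₀ : 0 < h₀)
    (heuler : ∀ h ∈ Set.Icc (0 : ℝ) h₀, ∀ y : E, ‖y + h • f y‖ ≤ ‖y‖) :
    ∀ h ∈ Set.Icc (0 : ℝ) h₀, ∀ y : E, ‖ssprk3Step h f y‖ ≤ ‖y‖ := by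
  intro h hh y
  obtain ⟨hh1, hh2⟩ := hh
  set y₁ := y + h • f y with hy₁
  set y₂ := (3 / 4 : ℝ) • y + (1 / 4 : ℝ) • y₁ + ((1 / 4 : ℝ) * h) • f y₁ with hy₂
  have h1 : ‖y₁‖ ≤ ‖y‖ := heuler h ⟨hh1, hh2⟩ y
  have h2 : ‖y₂‖ ≤ ‖y‖ := by
    have e2 : y₂ = (3 / 4 : ℝ) • y + (1 / 4 : ℝ) • (y₁ + h • f y₁) := by
      simp only [hy₂]; simp only [smul_add, smul_smul]; module
    rw [e2]
    calc ‖(3 / 4 : ℝ) • y + (1 / 4 : ℝ) • (y₁ + h • f y₁)‖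
        ≤ ‖(3 / 4 : ℝ) • y‖ + ‖(1 / 4 : ℝ) • (y₁ + h • f y₁)‖ := norm_add_le _ _
      _ = (3/4) * ‖y‖ + (1/4) * ‖y₁ + h • f y₁‖ := by
          rw [norm_smul, norm_smul]; norm_num
      _ ≤ (3/4) * ‖y‖ + (1/4) * ‖y‖ := by
          have := (heuler h ⟨hh1, hh2⟩ y₁).trans h1
          nlinarith
      _ = ‖y‖ := by ring
  show ‖(1 / 3 : ℝ) • y + (2 / 3 : ℝ) • y₂ + ((2 / 3 : ℝ) * h) • f y₂‖ ≤ ‖y‖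
  have e3 : (1 / 3 : ℝ) • y + (2 / 3 : ℝ) • y₂ + ((2 / 3 : ℝ) * h) • f y₂
      = (1 / 3 : ℝ) • y + (2 / 3 : ℝ) • (y₂ + h • f y₂) := by
    simp only [smul_add, smul_smul]; module
  rw [e3]
  calc ‖(1 / 3 : ℝ) • y + (2 / 3 : ℝ) • (y₂ + h • f y₂)‖
      ≤ ‖(1 / 3 : ℝ) • y‖ + ‖(2 / 3 : ℝ) • (y₂ + h • f y₂)‖ := norm_add_le _ _
    _ = (1/3) * ‖y‖ + (2/3) * ‖y₂ + h • f y₂‖ := by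
        rw [norm_smul, norm_smul]; norm_num
    _ ≤ (1/3) * ‖y‖ + (2/3) * ‖y‖ := by
        have := (heuler h ⟨hh1, hh2⟩ y₂).trans h2
        nlinarith
    _ = ‖y‖ := by ring
end

section
/- Let f : ℝ^d → ℝ^d be three times continuously differentiable and let y : ℝ → ℝ^d be differentiable with y'(t) = f(y(t)) for all t. Then for every t₀ ∈ ℝ the one-step (local truncation) error of SSPRK3 is of fourth order: there exist constants K > 0 and δ > 0 such that ‖Φ₃(h, f, y(t₀)) − y(t₀ + h)‖ ≤ K·h⁴ for all h ∈ (0, δ]. -/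
open Set Nat

section Aux
variable {E : Type*} [NormedAddCommGroup E] [NormedSpace ℝ E]

lemma eqOn_iteratedDerivWithin_iteratedDeriv {g : ℝ → E} {n : ℕ}
    (hg : ContDiff ℝ (n : ℕ) g) {s : Set ℝ} (hs : UniqueDiffOn ℝ s) :
    ∀ k ≤ n, Set.EqOn (iteratedDerivWithin k g s) (iteratedDeriv k g) s := by
  intro k
  induction k with
  | zero => intro _ x hx; simp
  | succ k ih =>
    intro hk x hx
    have hk' : k ≤ n := Nat.le_of_succ_le hk
    rw [iteratedDerivWithin_succ, iteratedDeriv_succ,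
      derivWithin_congr (ih hk') (ih hk' hx)]
    exact ((ContDiff.differentiable_iteratedDeriv k hg (by exact_mod_cast hk)) x).derivWithin
      (hs x hx)

lemma taylor_bound_unit {g : ℝ → E} (n : ℕ) (hg : ContDiff ℝ (n + 1 : ℕ) g) :
    ∃ C : ℝ, 0 ≤ C ∧ ∀ h ∈ Set.Icc (0 : ℝ) 1,
      ‖g h - ∑ k ∈ Finset.range (n + 1), ((k ! : ℝ)⁻¹ * h ^ k) • iteratedDeriv k g 0‖
        ≤ C * h ^ (n + 1) := by
  have hs : UniqueDiffOn ℝ (Set.Icc (0 : ℝ) 1) := uniqueDiffOn_Icc one_pos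
  have hgOn : ContDiffOn ℝ (n + 1 : ℕ) g (Set.Icc (0 : ℝ) 1) := hg.contDiffOn
  obtain ⟨C, hC⟩ := isCompact_Icc.exists_bound_of_continuousOn
    (hgOn.continuousOn_iteratedDerivWithin (m := n + 1) (by exact_mod_cast le_rfl) hs)
  have hC0 : 0 ≤ C := le_trans (norm_nonneg _) (hC 0 ⟨le_rfl, zero_le_one⟩)
  refine ⟨C / n !, by positivity, fun h hh => ?_⟩
  have hb := taylor_mean_remainder_bound (f := g) (n := n) (by norm_num : (0:ℝ) ≤ 1)
    (by exact_mod_cast hgOn) hh hC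
  rw [taylor_within_apply] at hb
  simp only [sub_zero] at hb
  have hsum : ∑ k ∈ Finset.range (n + 1),
      ((k ! : ℝ)⁻¹ * h ^ k) • iteratedDerivWithin k g (Set.Icc (0:ℝ) 1) 0
        = ∑ k ∈ Finset.range (n + 1), ((k ! : ℝ)⁻¹ * h ^ k) • iteratedDeriv k g 0 := by
    refine Finset.sum_congr rfl fun k hk => ?_
    rw [eqOn_iteratedDerivWithin_iteratedDeriv hg hs k
      ((Nat.le_of_lt_succ (Finset.mem_range.mp hk)).trans (Nat.le_succ n)) ⟨le_rfl, zero_le_one⟩]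
  rw [hsum] at hb
  calc ‖g h - ∑ k ∈ Finset.range (n + 1), ((k ! : ℝ)⁻¹ * h ^ k) • iteratedDeriv k g 0‖
      ≤ C * h ^ (n + 1) / n ! := hb
    _ = C / n ! * h ^ (n + 1) := by ring

lemma ode_contDiff {f : E → E} {Y : ℝ → E} (n : ℕ)
    (hf : ContDiff ℝ (n : ℕ) f) (hY : ∀ t, HasDerivAt Y (f (Y t)) t) :
    ContDiff ℝ (n + 1 : ℕ) Y := by
  have hYdiff : Differentiable ℝ Y := fun t => (hY t).differentiableAt
  have hdY : deriv Y = fun t => f (Y t) := funext fun t => (hY t).deriv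
  induction n with
  | zero =>
    have : ContDiff ℝ ((0 : ℕ) + 1 : WithTop ℕ∞) Y := by
      refine contDiff_succ_iff_deriv.2 ⟨hYdiff, by simp, ?_⟩
      rw [hdY]
      exact (contDiff_zero.2 hf.continuous).comp (contDiff_zero.2 hYdiff.continuous)
    exact_mod_cast this
  | succ k ih =>
    have hk : ContDiff ℝ (k + 1 : ℕ) Y := ih (hf.of_le (by exact_mod_cast Nat.le_succ k))
    have : ContDiff ℝ (((k + 1 : ℕ) : WithTop ℕ∞) + 1) Y := by
      refine contDiff_succ_iff_deriv.2 ⟨hYdiff, by simp, ?_⟩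
      rw [hdY]
      exact hf.comp hk
    exact_mod_cast this

end Aux

set_option maxHeartbeats 2000000 in
/-- If `f : ℝ^d → ℝ^d` is three times continuously differentiable and `y` solves
`y' = f(y)`, then at every time `t₀` the one-step (local truncation) error of SSPRK3 is
of fourth order: `‖Φ₃(h, f, y(t₀)) − y(t₀ + h)‖ ≤ K·h⁴` for all sufficiently small
`h > 0`. -/
theorem ssprk3_local_truncation_error_fourth_order
    {d : ℕ} (f : EuclideanSpace ℝ (Fin d) → EuclideanSpace ℝ (Fin d))
    (hf : ContDiff ℝ 3 f)
    (y : ℝ → EuclideanSpace ℝ (Fin d))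
    (hy : ∀ t : ℝ, HasDerivAt y (f (y t)) t) :
    ∀ t₀ : ℝ, ∃ K > (0 : ℝ), ∃ δ > (0 : ℝ), ∀ h ∈ Set.Ioc (0 : ℝ) δ,
      ‖ssprk3Step h f (y t₀) - y (t₀ + h)‖ ≤ K * h ^ 4 := by
  intro t₀
  set a := y t₀ with ha
  have hfd : Differentiable ℝ f := hf.differentiable (by norm_num)
  have hf'cd : ContDiff ℝ 2 (fderiv ℝ f) := hf.fderiv_right (by norm_num)
  have hf'd : Differentiable ℝ (fderiv ℝ f) := hf'cd.differentiable (by norm_num)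
  -- the auxiliary functions of the method
  set F₁ : ℝ → EuclideanSpace ℝ (Fin d) := fun h => f (a + h • f a) with hF₁def
  set y₂ : ℝ → EuclideanSpace ℝ (Fin d) :=
    fun h => (3 / 4 : ℝ) • a + (1 / 4 : ℝ) • (a + h • f a) + ((1 / 4 : ℝ) * h) • F₁ h with hy₂def
  set F₂ : ℝ → EuclideanSpace ℝ (Fin d) := fun h => f (y₂ h) with hF₂def
  set M : ℝ → EuclideanSpace ℝ (Fin d) :=
    fun h => (6⁻¹ : ℝ) • (f a + F₁ h + (4 : ℝ) • F₂ h) with hMdef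
  set F₁d : ℝ → EuclideanSpace ℝ (Fin d) :=
    fun h => fderiv ℝ f (a + h • f a) (f a) with hF₁ddef
  set y₂d : ℝ → EuclideanSpace ℝ (Fin d) :=
    fun h => (1 / 4 : ℝ) • f a + (1 / 4 : ℝ) • F₁ h + ((1 / 4 : ℝ) * h) • F₁d h with hy₂ddef
  set F₂d : ℝ → EuclideanSpace ℝ (Fin d) := fun h => fderiv ℝ f (y₂ h) (y₂d h) with hF₂ddef
  set Md : ℝ → EuclideanSpace ℝ (Fin d) :=
    fun h => (6⁻¹ : ℝ) • (F₁d h + (4 : ℝ) • F₂d h) with hMddef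
  set Y : ℝ → EuclideanSpace ℝ (Fin d) := fun h => y (t₀ + h) with hYdef
  -- the method step in slope form
  have hstep : ∀ h : ℝ, ssprk3Step h f a = a + h • M h := by
    intro h
    show (1/3 : ℝ) • a + (2/3 : ℝ) •
        ((3/4 : ℝ) • a + (1/4 : ℝ) • (a + h • f a) + ((1/4 : ℝ) * h) • f (a + h • f a))
        + ((2/3 : ℝ) * h) • f ((3/4 : ℝ) • a + (1/4 : ℝ) • (a + h • f a)
            + ((1/4 : ℝ) * h) • f (a + h • f a)) = a + h • M h
    simp only [hMdef, hF₂def, hy₂def, hF₁def]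
    module
  -- basic derivative facts
  have hy₁d : ∀ h : ℝ, HasDerivAt (fun s : ℝ => a + s • f a) (f a) h := by
    intro h
    simpa using ((hasDerivAt_id h).smul_const (f a)).const_add a
  have hF₁d' : ∀ h : ℝ, HasDerivAt F₁ (F₁d h) h := by
    intro h
    have := (hfd (a + h • f a)).hasFDerivAt.comp_hasDerivAt_of_eq h (hy₁d h) rfl
    simpa [hF₁def, hF₁ddef, Function.comp_def] using this
  have hcF₁ : ∀ h : ℝ, HasDerivAt (fun s : ℝ => fderiv ℝ f (a + s • f a))
      (fderiv ℝ (fderiv ℝ f) (a + h • f a) (f a)) h := by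
    intro h
    have := (hf'd (a + h • f a)).hasFDerivAt.comp_hasDerivAt_of_eq h (hy₁d h) rfl
    simpa [Function.comp_def] using this
  have hF₁dd : ∀ h : ℝ, HasDerivAt F₁d
      ((fderiv ℝ (fderiv ℝ f) (a + h • f a) (f a)) (f a)) h := by
    intro h
    have := (hcF₁ h).clm_apply (hasDerivAt_const h (f a))
    simpa [hF₁ddef] using this
  have hy₂d' : ∀ h : ℝ, HasDerivAt y₂ (y₂d h) h := by
    intro h
    have h2 := ((hy₁d h).const_smul (1/4 : ℝ)).const_add ((3/4 : ℝ) • a)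
    have h3 := ((hasDerivAt_id h).const_mul (1/4 : ℝ)).smul (hF₁d' h)
    have H := h2.add h3
    refine H.congr_deriv ?_
    simp only [hy₂ddef, id_eq]
    module
  have hF₂d' : ∀ h : ℝ, HasDerivAt F₂ (F₂d h) h := by
    intro h
    have := (hfd (y₂ h)).hasFDerivAt.comp_hasDerivAt_of_eq h (hy₂d' h) rfl
    simpa [hF₂def, hF₂ddef, Function.comp_def] using this
  have hMd' : ∀ h : ℝ, HasDerivAt M (Md h) h := by
    intro h
    have H := (((hF₁d' h).const_add (f a)).add ((hF₂d' h).const_smul (4 : ℝ))).const_smul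
      (6⁻¹ : ℝ)
    refine HasDerivAt.congr_deriv H ?_
    simp only [hMddef]
    all_goals module
  have hYd : ∀ h : ℝ, HasDerivAt Y (f (Y h)) h := by
    intro h
    have := HasDerivAt.scomp (x := h) (hy (t₀ + h)) ((hasDerivAt_id h).const_add t₀)
    simpa [hYdef, Function.comp_def] using this
  have hG₁d : ∀ h : ℝ, HasDerivAt (fun s => f (Y s)) (fderiv ℝ f (Y h) (f (Y h))) h := by
    intro h
    have := (hfd (Y h)).hasFDerivAt.comp_hasDerivAt_of_eq h (hYd h) rfl
    simpa [Function.comp_def] using this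
  have hdY : deriv Y = fun s => f (Y s) := funext fun s => (hYd s).deriv
  have hdG₁ : deriv (fun s => f (Y s)) = fun s => fderiv ℝ f (Y s) (f (Y s)) :=
    funext fun s => (hG₁d s).deriv
  have hdM : deriv M = Md := funext fun s => (hMd' s).deriv
  -- values at 0
  have hY0 : Y 0 = a := by simp [hYdef, ha]
  have hF₁0 : F₁ 0 = f a := by simp only [hF₁def, zero_smul, add_zero]
  have hy₂0 : y₂ 0 = a := by
    simp only [hy₂def, hF₁def, zero_smul, add_zero, mul_zero]
    module
  have hF₂0 : F₂ 0 = f a := by simp only [hF₂def]; rw [hy₂0]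
  have hM0 : M 0 = f a := by
    simp only [hMdef]; rw [hF₁0, hF₂0]; module
  have hF₁d0 : F₁d 0 = fderiv ℝ f a (f a) := by simp only [hF₁ddef, zero_smul, add_zero]
  have hy₂d0 : y₂d 0 = (1/4 : ℝ) • f a + (1/4 : ℝ) • f a := by
    simp only [hy₂ddef, mul_zero, zero_smul, add_zero]
    rw [hF₁0]
  have hF₂d0 : F₂d 0 = (1/2 : ℝ) • fderiv ℝ f a (f a) := by
    simp only [hF₂ddef]
    rw [hy₂0, hy₂d0]
    simp only [map_add, map_smul]
    module
  -- second-level derivative facts at 0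
  have hy₂dd0 : HasDerivAt y₂d ((1/2 : ℝ) • F₁d 0) 0 := by
    have H := ((hasDerivAt_const (0:ℝ) ((1/4 : ℝ) • f a)).add
        ((hF₁d' 0).const_smul (1/4 : ℝ))).add
      (((hasDerivAt_id (0:ℝ)).const_mul (1/4 : ℝ)).smul (hF₁dd 0))
    refine HasDerivAt.congr_deriv H ?_
    simp only [id_eq]
    module
  have hcF₂ : HasDerivAt (fun s => fderiv ℝ f (y₂ s))
      (fderiv ℝ (fderiv ℝ f) (y₂ 0) (y₂d 0)) 0 := by
    have := (hf'd (y₂ 0)).hasFDerivAt.comp_hasDerivAt_of_eq 0 (hy₂d' 0) rfl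
    simpa [Function.comp_def] using this
  have hF₂dd0 : HasDerivAt F₂d
      (fderiv ℝ (fderiv ℝ f) (y₂ 0) (y₂d 0) (y₂d 0)
        + fderiv ℝ f (y₂ 0) ((1/2 : ℝ) • F₁d 0)) 0 := by
    have := hcF₂.clm_apply hy₂dd0
    exact this
  have hMdd0 : HasDerivAt Md ((6⁻¹ : ℝ) •
      ((fderiv ℝ (fderiv ℝ f) (a + (0:ℝ) • f a) (f a)) (f a)
        + (4 : ℝ) • (fderiv ℝ (fderiv ℝ f) (y₂ 0) (y₂d 0) (y₂d 0)
            + fderiv ℝ f (y₂ 0) ((1/2 : ℝ) • F₁d 0)))) 0 := by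
    exact ((hF₁dd 0).add (hF₂dd0.const_smul (4 : ℝ))).const_smul (6⁻¹ : ℝ)
  have hG₂d0 : HasDerivAt (fun s => fderiv ℝ f (Y s) (f (Y s)))
      (fderiv ℝ (fderiv ℝ f) a (f a) (f a) + fderiv ℝ f a (fderiv ℝ f a (f a))) 0 := by
    have hc : HasDerivAt (fun s => fderiv ℝ f (Y s))
        (fderiv ℝ (fderiv ℝ f) (Y 0) (f (Y 0))) 0 := by
      have := (hf'd (Y 0)).hasFDerivAt.comp_hasDerivAt_of_eq 0 (hYd 0) rfl
      simpa [Function.comp_def] using this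
    have := hc.clm_apply (hG₁d 0)
    rw [hY0] at this
    exact this
  -- the matching of Taylor coefficients
  have e₁ : iteratedDeriv 1 Y 0 = M 0 := by
    simp only [iteratedDeriv_one, hdY, hY0, hM0]
  have e₂ : iteratedDeriv 2 Y 0 = (2 : ℝ) • iteratedDeriv 1 M 0 := by
    have l : iteratedDeriv 2 Y 0 = fderiv ℝ f a (f a) := by
      rw [show (2:ℕ) = 1 + 1 from rfl, iteratedDeriv_succ, iteratedDeriv_one, hdY, hdG₁]
      simp only [hY0]
    have r : iteratedDeriv 1 M 0 = Md 0 := by rw [iteratedDeriv_one, hdM]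
    rw [l, r]
    simp only [hMddef]
    rw [hF₁d0, hF₂d0]
    module
  have e₃ : iteratedDeriv 3 Y 0 = (3 : ℝ) • iteratedDeriv 2 M 0 := by
    have l : iteratedDeriv 3 Y 0 =
        fderiv ℝ (fderiv ℝ f) a (f a) (f a) + fderiv ℝ f a (fderiv ℝ f a (f a)) := by
      rw [show (3:ℕ) = 1 + 1 + 1 from rfl, iteratedDeriv_succ, iteratedDeriv_succ,
        iteratedDeriv_one, hdY, hdG₁]
      exact hG₂d0.deriv
    have r : iteratedDeriv 2 M 0 = deriv Md 0 := by
      rw [show (2:ℕ) = 1 + 1 from rfl, iteratedDeriv_succ, iteratedDeriv_one, hdM]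
    rw [l, r, hMdd0.deriv]
    rw [hy₂0, hy₂d0, hF₁d0]
    simp only [zero_smul, add_zero, map_add, map_smul, ContinuousLinearMap.add_apply,
      ContinuousLinearMap.coe_smul', Pi.smul_apply]
    module
  -- smoothness
  have hy₁cd : ContDiff ℝ 3 (fun h : ℝ => a + h • f a) :=
    contDiff_const.add (contDiff_id.smul contDiff_const)
  have hF₁cd : ContDiff ℝ 3 F₁ := by rw [hF₁def]; exact hf.comp hy₁cd
  have hy₂cd : ContDiff ℝ 3 y₂ := by
    rw [hy₂def]
    exact (contDiff_const.add (hy₁cd.const_smul (1/4 : ℝ))).add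
      ((contDiff_const.mul contDiff_id).smul hF₁cd)
  have hF₂cd : ContDiff ℝ 3 F₂ := by rw [hF₂def]; exact hf.comp hy₂cd
  have hMcd : ContDiff ℝ 3 M := by
    rw [hMdef]
    exact (((contDiff_const.add hF₁cd).add (hF₂cd.const_smul (4 : ℝ))).const_smul (6⁻¹ : ℝ))
  have hY4 : ContDiff ℝ (3 + 1 : ℕ) Y := ode_contDiff 3 (by exact_mod_cast hf) hYd
  -- Taylor bounds
  obtain ⟨C₁, hC₁0, hC₁⟩ := taylor_bound_unit 3 hY4
  obtain ⟨C₂, hC₂0, hC₂⟩ := taylor_bound_unit 2 (by exact_mod_cast hMcd : ContDiff ℝ (2+1 : ℕ) M)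
  refine ⟨C₁ + C₂ + 1, by positivity, 1, one_pos, fun h hh => ?_⟩
  have hb₁ := hC₁ h ⟨hh.1.le, hh.2⟩
  have hb₂ := hC₂ h ⟨hh.1.le, hh.2⟩
  have key : ssprk3Step h f a - Y h =
      h • (M h - ∑ k ∈ Finset.range (2 + 1), ((k ! : ℝ)⁻¹ * h ^ k) • iteratedDeriv k M 0)
        - (Y h - ∑ k ∈ Finset.range (3 + 1), ((k ! : ℝ)⁻¹ * h ^ k) • iteratedDeriv k Y 0) := by
    rw [hstep h]
    simp only [Finset.sum_range_succ, Finset.sum_range_zero, zero_add, iteratedDeriv_zero]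
    rw [hY0, e₁, e₂, e₃]
    norm_num [Nat.factorial]
    module
  show ‖ssprk3Step h f a - Y h‖ ≤ (C₁ + C₂ + 1) * h ^ 4
  calc ‖ssprk3Step h f a - Y h‖
      = ‖h • (M h - ∑ k ∈ Finset.range (2 + 1), ((k ! : ℝ)⁻¹ * h ^ k) • iteratedDeriv k M 0)
          - (Y h - ∑ k ∈ Finset.range (3 + 1), ((k ! : ℝ)⁻¹ * h ^ k) • iteratedDeriv k Y 0)‖ := by
        rw [key]
    _ ≤ ‖h • (M h - ∑ k ∈ Finset.range (2 + 1), ((k ! : ℝ)⁻¹ * h ^ k) • iteratedDeriv k M 0)‖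
          + ‖Y h - ∑ k ∈ Finset.range (3 + 1), ((k ! : ℝ)⁻¹ * h ^ k) • iteratedDeriv k Y 0‖ :=
        norm_sub_le _ _
    _ = |h| * ‖M h - ∑ k ∈ Finset.range (2 + 1), ((k ! : ℝ)⁻¹ * h ^ k) • iteratedDeriv k M 0‖
          + ‖Y h - ∑ k ∈ Finset.range (3 + 1), ((k ! : ℝ)⁻¹ * h ^ k) • iteratedDeriv k Y 0‖ := by
        rw [norm_smul, Real.norm_eq_abs]
    _ ≤ h * (C₂ * h ^ (2 + 1)) + C₁ * h ^ (3 + 1) := by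
        rw [abs_of_pos hh.1]
        exact add_le_add (mul_le_mul_of_nonneg_left hb₂ hh.1.le) hb₁
    _ = (C₁ + C₂) * h ^ 4 := by ring
    _ ≤ (C₁ + C₂ + 1) * h ^ 4 := by
        have h4 : (0:ℝ) ≤ h ^ 4 := by positivity
        nlinarith [h4]
end
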